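/- Let 𝒴₁, 𝒴₂, 𝒳 be countable sets and let f be a probability mass function on 𝒴₁ × 𝒴₂ × 𝒳 with strictly positive marginal f_X(x) = Σ_{y₁,y₂} f(y₁,y₂,x) for every x, satisfying the conditional independence property f(y₁,y₂,x) · f_X(x) = (Σ_{b} f(y₁,b,x)) · (Σ_{a} f(a,y₂,x)) for all (y₁,y₂,x). Let f₁(y₁|x) = Σ_b f(y₁,b,x)/f_X(x), f₂(y₂|x) = Σ_a f(a,y₂,x)/f_X(x), f_Y(y₁,y₂) = Σ_x f(y₁,y₂,x) (assumed strictly positive), and f_{X|Y}(x|y₁,y₂) = f(y₁,y₂,x)/f_Y(y₁,y₂). Let c₁ : 𝒳 → [0,1] be arbitrary. Consider the ADDA Markov kernel on 𝒴₁ × 𝒴₂ × 𝒳 that, from state (y₁,y₂,x), with probability c₁(x) draws y₁' ~ f₁(·|x) and sets y₂' = y₂, and with probability 1 − c₁(x) draws y₂' ~ f₂(·|x) and sets y₁' = y₁, and then draws x' ~ f_{X|Y}(·|y₁',y₂'). Then f is a stationary (invariant) distribution for this kernel: for every (ỹ₁,ỹ₂,x̃), summing the one-step transition probability into (ỹ₁,ỹ₂,x̃)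 against f over starting states yields f(ỹ₁,ỹ₂,x̃). -/

import Mathlib

theorem adda_aux {a b c d : ℝ} (ha0 : 0 ≤ a) (ha1 : a ≤ 1) (hb0 : 0 ≤ b)
    (hb1 : b ≤ 1) (hc : 0 ≤ c) (hd : 0 ≤ d) : a * b * c * d ≤ c * d := by
  have hab : a * b ≤ 1 := by
    calc a * b ≤ 1 * 1 := mul_le_mul ha1 hb1 hb0 zero_le_one
    _ = 1 := one_mul 1
  calc a * b * c * d = (a * b) * (c * d) := by ring
  _ ≤ 1 * (c * d) := mul_le_mul_of_nonneg_right hab (mul_nonneg hc hd)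
  _ = c * d := one_mul _

/-- Invariance of the joint distribution `f` of `(Y¹, Y², X)` under the ADDA
(asynchronous distributed data augmentation) Markov kernel, in the discrete
two-block case. -/
theorem stmt_8 {Y₁ Y₂ X : Type*} [Countable Y₁] [Countable Y₂] [Countable X]
    [DecidableEq Y₁] [DecidableEq Y₂]
    (f : Y₁ → Y₂ → X → ℝ)
    (hf_nonneg : ∀ y₁ y₂ x, 0 ≤ f y₁ y₂ x)
    (hf_prob : ∑' z : Y₁ × Y₂ × X, f z.1 z.2.1 z.2.2 = 1)
    (fX : X → ℝ) (hfX : ∀ x, fX x = ∑' z : Y₁ × Y₂, f z.1 z.2 x)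
    (hfX_pos : ∀ x, 0 < fX x)
    (fY : Y₁ → Y₂ → ℝ) (hfY : ∀ y₁ y₂, fY y₁ y₂ = ∑' x, f y₁ y₂ x)
    (hfY_pos : ∀ y₁ y₂, 0 < fY y₁ y₂)
    -- conditional independence of the two latent blocks given X
    (hCI : ∀ y₁ y₂ x, f y₁ y₂ x * fX x = (∑' b, f y₁ b x) * (∑' a, f a y₂ x))
    (c₁ : X → ℝ) (hc₁ : ∀ x, 0 ≤ c₁ x ∧ c₁ x ≤ 1)
    (f₁ : Y₁ → X → ℝ) (hf₁ : ∀ y₁ x, f₁ y₁ x = (∑' b, f y₁ b x) / fX x)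
    (f₂ : Y₂ → X → ℝ) (hf₂ : ∀ y₂ x, f₂ y₂ x = (∑' a, f a y₂ x) / fX x)
    (fXY : X → Y₁ → Y₂ → ℝ) (hfXY : ∀ x y₁ y₂, fXY x y₁ y₂ = f y₁ y₂ x / fY y₁ y₂)
    -- the ADDA one-step transition probability from s = (y₁, y₂, x) to t = (y₁', y₂', x')
    (K : Y₁ × Y₂ × X → Y₁ × Y₂ × X → ℝ)
    (hK : ∀ s t, K s t =
      (c₁ s.2.2 * f₁ t.1 s.2.2 * (if s.2.1 = t.2.1 then (1:ℝ) else 0)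
        + (1 - c₁ s.2.2) * f₂ t.2.1 s.2.2 * (if s.1 = t.1 then (1:ℝ) else 0))
      * fXY t.2.2 t.1 t.2.1) :
    ∀ t : Y₁ × Y₂ × X,
      (∑' s : Y₁ × Y₂ × X, K s t * f s.1 s.2.1 s.2.2) = f t.1 t.2.1 t.2.2 := by
  classical
  rintro ⟨a₁, a₂, xt⟩
  -- global summability
  have hF : Summable (fun z : Y₁ × Y₂ × X => f z.1 z.2.1 z.2.2) := by
    by_contra h
    rw [tsum_eq_zero_of_not_summable h] at hf_prob
    norm_num at hf_prob
  have hsum_x : ∀ y₁ y₂, Summable (fun x => f y₁ y₂ x) := by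
    intro y₁ y₂
    have := hF.comp_injective (i := fun x : X => (y₁, y₂, x))
      (fun a b hab => by simpa using (congrArg (fun z : Y₁ × Y₂ × X => z.2.2) hab))
    exact this
  have hsum_y1 : ∀ y₂ x, Summable (fun y₁ => f y₁ y₂ x) := by
    intro y₂ x
    have := hF.comp_injective (i := fun y₁ : Y₁ => (y₁, y₂, x))
      (fun a b hab => by simpa using (congrArg (fun z : Y₁ × Y₂ × X => z.1) hab))
    exact this
  have hsum_y2 : ∀ y₁ x, Summable (fun y₂ => f y₁ y₂ x) := by
    intro y₁ x
    have := hF.comp_injective (i := fun y₂ : Y₂ => (y₁, y₂, x))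
      (fun a b hab => by simpa using (congrArg (fun z : Y₁ × Y₂ × X => z.2.1) hab))
    exact this
  have hsum_pair : ∀ x, Summable (fun p : Y₁ × Y₂ => f p.1 p.2 x) := by
    intro x
    have := hF.comp_injective (i := fun p : Y₁ × Y₂ => (p.1, p.2, x))
      (fun a b hab => by
        have h1 := congrArg (fun z : Y₁ × Y₂ × X => z.1) hab
        have h2 := congrArg (fun z : Y₁ × Y₂ × X => z.2.1) hab
        simp at h1 h2
        exact Prod.ext h1 h2)
    exact this
  have hsum_y1x : ∀ y₂, Summable (fun p : Y₁ × X => f p.1 y₂ p.2) := by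
    intro y₂
    have := hF.comp_injective (i := fun p : Y₁ × X => (p.1, y₂, p.2))
      (fun a b hab => by
        have h1 := congrArg (fun z : Y₁ × Y₂ × X => z.1) hab
        have h2 := congrArg (fun z : Y₁ × Y₂ × X => z.2.2) hab
        simp at h1 h2
        exact Prod.ext h1 h2)
    exact this
  -- abbreviations
  set C : ℝ := fXY xt a₁ a₂ with hC
  have hC_nonneg : 0 ≤ C := by
    rw [hC, hfXY]
    exact div_nonneg (hf_nonneg _ _ _) (hfY_pos _ _).le
  set S₁ : X → ℝ := fun x => ∑' b, f a₁ b x with hS₁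
  set S₂ : X → ℝ := fun x => ∑' a, f a a₂ x with hS₂
  have hS₁_nonneg : ∀ x, 0 ≤ S₁ x := fun x => tsum_nonneg fun b => hf_nonneg _ _ _
  have hS₂_nonneg : ∀ x, 0 ≤ S₂ x := fun x => tsum_nonneg fun a => hf_nonneg _ _ _
  have hS₁_le : ∀ x, S₁ x ≤ fX x := by
    intro x
    rw [hfX x]
    exact Summable.tsum_le_tsum_of_inj (fun b : Y₂ => ((a₁, b) : Y₁ × Y₂))
      (fun a b hab => by simpa using congrArg Prod.snd hab)
      (fun c _ => hf_nonneg _ _ _) (fun b => le_refl _) (hsum_y2 a₁ x) (hsum_pair x)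
  have hS₂_le : ∀ x, S₂ x ≤ fX x := by
    intro x
    rw [hfX x]
    exact Summable.tsum_le_tsum_of_inj (fun a : Y₁ => ((a, a₂) : Y₁ × Y₂))
      (fun a b hab => by simpa using congrArg Prod.fst hab)
      (fun c _ => hf_nonneg _ _ _) (fun b => le_refl _) (hsum_y1 a₂ x) (hsum_pair x)
  have hf₁_nonneg : ∀ x, 0 ≤ f₁ a₁ x := by
    intro x; rw [hf₁]; exact div_nonneg (hS₁_nonneg x) (hfX_pos x).le
  have hf₁_le : ∀ x, f₁ a₁ x ≤ 1 := by
    intro x; rw [hf₁]; exact div_le_one_of_le₀ (hS₁_le x) (hfX_pos x).le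
  have hf₂_nonneg : ∀ x, 0 ≤ f₂ a₂ x := by
    intro x; rw [hf₂]; exact div_nonneg (hS₂_nonneg x) (hfX_pos x).le
  have hf₂_le : ∀ x, f₂ a₂ x ≤ 1 := by
    intro x; rw [hf₂]; exact div_le_one_of_le₀ (hS₂_le x) (hfX_pos x).le
  -- key collapse identities
  have key1 : ∀ x, f₁ a₁ x * S₂ x = f a₁ a₂ x := by
    intro x
    rw [hf₁, show S₂ x = ∑' a, f a a₂ x from rfl, div_mul_eq_mul_div,
      div_eq_iff (hfX_pos x).ne']
    linarith [hCI a₁ a₂ x]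
  have key2 : ∀ x, f₂ a₂ x * S₁ x = f a₁ a₂ x := by
    intro x
    rw [hf₂, show S₁ x = ∑' b, f a₁ b x from rfl, div_mul_eq_mul_div,
      div_eq_iff (hfX_pos x).ne']
    linarith [hCI a₁ a₂ x]
  -- split the kernel into two parts
  set G₁ : Y₁ × Y₂ × X → ℝ := fun s =>
    if s.2.1 = a₂ then c₁ s.2.2 * f₁ a₁ s.2.2 * C * f s.1 s.2.1 s.2.2 else 0 with hG₁
  set G₂ : Y₁ × Y₂ × X → ℝ := fun s =>
    if s.1 = a₁ then (1 - c₁ s.2.2) * f₂ a₂ s.2.2 * C * f s.1 s.2.1 s.2.2 else 0 with hG₂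
  have hsplit : ∀ s : Y₁ × Y₂ × X,
      K s (a₁, a₂, xt) * f s.1 s.2.1 s.2.2 = G₁ s + G₂ s := by
    intro s
    rw [hK, hG₁, hG₂]
    simp only
    split_ifs <;> ring
  have hG₁_nonneg : ∀ s, 0 ≤ G₁ s := by
    intro s; rw [hG₁]; dsimp only
    split_ifs with h
    · exact mul_nonneg (mul_nonneg (mul_nonneg (hc₁ _).1 (hf₁_nonneg _)) hC_nonneg)
        (hf_nonneg _ _ _)
    · exact le_rfl
  have hG₂_nonneg : ∀ s, 0 ≤ G₂ s := by
    intro s; rw [hG₂]; dsimp only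
    split_ifs with h
    · exact mul_nonneg (mul_nonneg (mul_nonneg (by linarith [(hc₁ s.2.2).2])
        (hf₂_nonneg _)) hC_nonneg) (hf_nonneg _ _ _)
    · exact le_rfl
  have hG₁_le : ∀ s, G₁ s ≤ C * f s.1 s.2.1 s.2.2 := by
    intro s; rw [hG₁]; dsimp only
    split_ifs with h
    · have h1 := (hc₁ s.2.2).1; have h2 := (hc₁ s.2.2).2
      have h3 := hf₁_nonneg s.2.2; have h4 := hf₁_le s.2.2
      have h5 := hf_nonneg s.1 s.2.1 s.2.2
      exact adda_aux h1 h2 h3 h4 hC_nonneg h5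
    · exact mul_nonneg hC_nonneg (hf_nonneg _ _ _)
  have hG₂_le : ∀ s, G₂ s ≤ C * f s.1 s.2.1 s.2.2 := by
    intro s; rw [hG₂]; dsimp only
    split_ifs with h
    · have h1 := (hc₁ s.2.2).1; have h2 := (hc₁ s.2.2).2
      have h3 := hf₂_nonneg s.2.2; have h4 := hf₂_le s.2.2
      have h5 := hf_nonneg s.1 s.2.1 s.2.2
      exact adda_aux (by linarith) (by linarith) h3 h4 hC_nonneg h5
    · exact mul_nonneg hC_nonneg (hf_nonneg _ _ _)
  have hG₁_sum : Summable G₁ :=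
    Summable.of_nonneg_of_le hG₁_nonneg hG₁_le (hF.mul_left C)
  have hG₂_sum : Summable G₂ :=
    Summable.of_nonneg_of_le hG₂_nonneg hG₂_le (hF.mul_left C)
  -- compute the first part
  have hT1 : (∑' s : Y₁ × Y₂ × X, G₁ s) = ∑' x, C * (c₁ x * f a₁ a₂ x) := by
    have step1 : (∑' s : Y₁ × Y₂ × X, G₁ s)
        = ∑' y₁, ∑' x, c₁ x * f₁ a₁ x * C * f y₁ a₂ x := by
      rw [Summable.tsum_prod hG₁_sum]
      congr 1; funext y₁
      rw [Summable.tsum_prod (hG₁_sum.prod_factor y₁)]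
      have : ∀ y₂, (∑' x, G₁ (y₁, y₂, x))
          = if y₂ = a₂ then (∑' x, c₁ x * f₁ a₁ x * C * f y₁ a₂ x) else 0 := by
        intro y₂
        by_cases h : y₂ = a₂
        · subst h; simp [hG₁]
        · simp [hG₁, h]
      rw [tsum_congr this, tsum_ite_eq]
    rw [step1]
    have hswap : (∑' y₁, ∑' x, c₁ x * f₁ a₁ x * C * f y₁ a₂ x)
        = ∑' x, ∑' y₁, c₁ x * f₁ a₁ x * C * f y₁ a₂ x := by
      refine Summable.tsum_comm' ?_ ?_ ?_
      · refine Summable.of_nonneg_of_le (f := fun p : X × Y₁ => C * f p.2 a₂ p.1)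
          (fun p => mul_nonneg (mul_nonneg (mul_nonneg (hc₁ _).1 (hf₁_nonneg _))
            hC_nonneg) (hf_nonneg _ _ _)) (fun p => ?_) ?_
        · have h1 := (hc₁ p.1).1; have h2 := (hc₁ p.1).2
          have h3 := hf₁_nonneg p.1; have h4 := hf₁_le p.1
          have h5 := hf_nonneg p.2 a₂ p.1
          exact adda_aux h1 h2 h3 h4 hC_nonneg h5
        · have hinj : Function.Injective (fun p : X × Y₁ => ((p.2, a₂, p.1) : Y₁ × Y₂ × X)) := by
            intro a b hab
            have h1 := congrArg (fun z : Y₁ × Y₂ × X => z.1) hab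
            have h2 := congrArg (fun z : Y₁ × Y₂ × X => z.2.2) hab
            simp at h1 h2
            exact Prod.ext h2 h1
          have hbase : Summable (fun p : X × Y₁ => C * f p.2 a₂ p.1) :=
            ((hF.comp_injective hinj).mul_left C).congr (fun p => by simp [Function.comp])
          exact hbase
      · intro x
        exact (hsum_y1 a₂ x).mul_left (c₁ x * f₁ a₁ x * C)
      · intro y₁
        refine Summable.of_nonneg_of_le (f := fun x => C * f y₁ a₂ x)
          (fun x => mul_nonneg (mul_nonneg (mul_nonneg (hc₁ _).1 (hf₁_nonneg _))
            hC_nonneg) (hf_nonneg _ _ _)) (fun x => ?_) ((hsum_x y₁ a₂).mul_left C)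
        have h1 := (hc₁ x).1; have h2 := (hc₁ x).2
        have h3 := hf₁_nonneg x; have h4 := hf₁_le x
        have h5 := hf_nonneg y₁ a₂ x
        exact adda_aux h1 h2 h3 h4 hC_nonneg h5
    rw [hswap]
    congr 1; funext x
    have : (∑' y₁, c₁ x * f₁ a₁ x * C * f y₁ a₂ x)
        = (c₁ x * f₁ a₁ x * C) * S₂ x := by
      rw [hS₂]; exact tsum_mul_left
    rw [this]
    linear_combination (c₁ x * C) * key1 x
  -- compute the second part
  have hT2 : (∑' s : Y₁ × Y₂ × X, G₂ s) = ∑' x, C * ((1 - c₁ x) * f a₁ a₂ x) := by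
    have hW_sum : Summable (fun p : Y₂ × X => (1 - c₁ p.2) * f₂ a₂ p.2 * C * f a₁ p.1 p.2) := by
      have hinj : Function.Injective (fun p : Y₂ × X => ((a₁, p.1, p.2) : Y₁ × Y₂ × X)) := by
        intro a b hab
        have h1 := congrArg (fun z : Y₁ × Y₂ × X => z.2.1) hab
        have h2 := congrArg (fun z : Y₁ × Y₂ × X => z.2.2) hab
        simp at h1 h2
        exact Prod.ext h1 h2
      have hbase : Summable (fun p : Y₂ × X => C * f a₁ p.1 p.2) :=
        ((hF.comp_injective hinj).mul_left C).congr (fun p => by simp [Function.comp])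
      refine Summable.of_nonneg_of_le
        (fun p => mul_nonneg (mul_nonneg (mul_nonneg (by linarith [(hc₁ p.2).2])
          (hf₂_nonneg _)) hC_nonneg) (hf_nonneg _ _ _)) (fun p => ?_) hbase
      have h1 := (hc₁ p.2).1; have h2 := (hc₁ p.2).2
      have h3 := hf₂_nonneg p.2; have h4 := hf₂_le p.2
      have h5 := hf_nonneg a₁ p.1 p.2
      exact adda_aux (by linarith) (by linarith) h3 h4 hC_nonneg h5
    have step1 : (∑' s : Y₁ × Y₂ × X, G₂ s)
        = ∑' p : Y₂ × X, (1 - c₁ p.2) * f₂ a₂ p.2 * C * f a₁ p.1 p.2 := by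
      rw [Summable.tsum_prod hG₂_sum]
      have : ∀ y₁, (∑' p : Y₂ × X, G₂ (y₁, p))
          = if y₁ = a₁ then (∑' p : Y₂ × X, (1 - c₁ p.2) * f₂ a₂ p.2 * C * f a₁ p.1 p.2)
            else 0 := by
        intro y₁
        by_cases h : y₁ = a₁
        · subst h; simp [hG₂]
        · simp [hG₂, h]
      rw [tsum_congr this, tsum_ite_eq]
    rw [step1, Summable.tsum_prod hW_sum]
    have hswap : (∑' y₂, ∑' x, (1 - c₁ x) * f₂ a₂ x * C * f a₁ y₂ x)
        = ∑' x, ∑' y₂, (1 - c₁ x) * f₂ a₂ x * C * f a₁ y₂ x := by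
      refine Summable.tsum_comm' ?_ ?_ ?_
      · exact hW_sum.comp_injective (i := Prod.swap) Prod.swap_injective
      · intro x
        exact (hsum_y2 a₁ x).mul_left ((1 - c₁ x) * f₂ a₂ x * C)
      · intro y₂
        refine Summable.of_nonneg_of_le (f := fun x => C * f a₁ y₂ x)
          (fun x => mul_nonneg (mul_nonneg (mul_nonneg (by linarith [(hc₁ x).2])
            (hf₂_nonneg _)) hC_nonneg) (hf_nonneg _ _ _)) (fun x => ?_)
          ((hsum_x a₁ y₂).mul_left C)
        have h1 := (hc₁ x).1; have h2 := (hc₁ x).2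
        have h3 := hf₂_nonneg x; have h4 := hf₂_le x
        have h5 := hf_nonneg a₁ y₂ x
        exact adda_aux (by linarith) (by linarith) h3 h4 hC_nonneg h5
    rw [hswap]
    congr 1; funext x
    have : (∑' y₂, (1 - c₁ x) * f₂ a₂ x * C * f a₁ y₂ x)
        = ((1 - c₁ x) * f₂ a₂ x * C) * S₁ x := by
      rw [hS₁]; exact tsum_mul_left
    rw [this]
    linear_combination ((1 - c₁ x) * C) * key2 x
  -- put things together
  have hsum1 : Summable (fun x => C * (c₁ x * f a₁ a₂ x)) := by
    refine Summable.of_nonneg_of_le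
      (fun x => mul_nonneg hC_nonneg (mul_nonneg (hc₁ x).1 (hf_nonneg _ _ _)))
      (fun x => ?_) ((hsum_x a₁ a₂).mul_left C)
    have h1 := (hc₁ x).1; have h2 := (hc₁ x).2
    have h5 := hf_nonneg a₁ a₂ x
    exact mul_le_mul_of_nonneg_left (mul_le_of_le_one_left h5 h2) hC_nonneg
  have hsum2 : Summable (fun x => C * ((1 - c₁ x) * f a₁ a₂ x)) := by
    refine Summable.of_nonneg_of_le
      (fun x => mul_nonneg hC_nonneg (mul_nonneg (by linarith [(hc₁ x).2])
        (hf_nonneg _ _ _))) (fun x => ?_) ((hsum_x a₁ a₂).mul_left C)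
    have h1 := (hc₁ x).1; have h2 := (hc₁ x).2
    have h5 := hf_nonneg a₁ a₂ x
    exact mul_le_mul_of_nonneg_left (mul_le_of_le_one_left h5 (by linarith)) hC_nonneg
  calc (∑' s : Y₁ × Y₂ × X, K s (a₁, a₂, xt) * f s.1 s.2.1 s.2.2)
      = ∑' s : Y₁ × Y₂ × X, (G₁ s + G₂ s) := tsum_congr hsplit
    _ = (∑' s, G₁ s) + (∑' s, G₂ s) := Summable.tsum_add hG₁_sum hG₂_sum
    _ = (∑' x, C * (c₁ x * f a₁ a₂ x)) + (∑' x, C * ((1 - c₁ x) * f a₁ a₂ x)) := by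
        rw [hT1, hT2]
    _ = ∑' x, (C * (c₁ x * f a₁ a₂ x) + C * ((1 - c₁ x) * f a₁ a₂ x)) :=
        (Summable.tsum_add hsum1 hsum2).symm
    _ = ∑' x, C * f a₁ a₂ x := by
        congr 1; funext x; ring
    _ = C * fY a₁ a₂ := by rw [tsum_mul_left, ← hfY]
    _ = f a₁ a₂ xt := by
        rw [hC, hfXY]
        exact div_mul_cancel₀ _ (hfY_pos a₁ a₂).ne'
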